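/- Let H₊ and H₋ be Hermitian n×n complex matrices such that H₊ is positive definite and the kernel of H₋ equals the span of two linearly independent vectors φ₁, φ₂ ∈ ℂⁿ. Let H : ℂⁿ × ℂⁿ → ℂⁿ × ℂⁿ be the linear map H(f, g) = (H₋g, H₊f). Then: (i) ker(H) = {0} × span{φ₁, φ₂}; (ii) ker(H²) = ker(H) ⊕ span{(H₊⁻¹φ₁, 0), (H₊⁻¹φ₂, 0)}; (iii) ker(H³) = ker(H²). In particular, the generalized nullspace of H equals ker(H²) and has dimension 4. -/

import Mathlib

/- STATEMENT 13 (generalized nullspace, two-dimensional case): H(f,g) = (H₋g, H₊f)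
with H₊ Hermitian positive definite and ker H₋ = span{φ₁, φ₂} with φ₁, φ₂
linearly independent. Then ker H = {0} × span{φ₁, φ₂},
ker H² = ker H ⊕ span{(H₊⁻¹φ₁, 0), (H₊⁻¹φ₂, 0)}, ker H³ = ker H², and the
generalized nullspace ker H² has dimension 4. -/

open Matrix
open scoped ComplexOrder

lemma finrank_span_pair_aux {K M : Type*} [Field K] [AddCommGroup M] [Module K M] (a b : M)
    (h : LinearIndependent K ![a, b]) :
    Module.finrank K (Submodule.span K ({a, b} : Set M)) = 2 := by
  have hr : Set.range ![a, b] = {a, b} := by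
    ext x; simp [Fin.exists_fin_two, or_comm]
  have := finrank_span_eq_card h
  rwa [hr, Fintype.card_fin] at this

theorem generalized_nullspace_without_josephson
    (n : ℕ) (Hp Hm : Matrix (Fin n) (Fin n) ℂ)
    (hHm : Hm.IsHermitian) (hHpHerm : Hp.IsHermitian) (hHp : Hp.PosDef)
    (φ1 φ2 : Fin n → ℂ) (hind : LinearIndependent ℂ ![φ1, φ2])
    (hker : LinearMap.ker Hm.mulVecLin = Submodule.span ℂ {φ1, φ2})
    (H : Module.End ℂ ((Fin n → ℂ) × (Fin n → ℂ)))
    (hH : ∀ fg : (Fin n → ℂ) × (Fin n → ℂ), H fg = (Hm.mulVec fg.2, Hp.mulVec fg.1)) :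
    LinearMap.ker H = Submodule.prod ⊥ (Submodule.span ℂ {φ1, φ2})
    ∧ LinearMap.ker (H ^ 2)
        = LinearMap.ker H ⊔ Submodule.span ℂ
            {((Hp⁻¹.mulVec φ1, 0) : (Fin n → ℂ) × (Fin n → ℂ)),
             ((Hp⁻¹.mulVec φ2, 0) : (Fin n → ℂ) × (Fin n → ℂ))}
    ∧ Disjoint (LinearMap.ker H)
        (Submodule.span ℂ
            {((Hp⁻¹.mulVec φ1, 0) : (Fin n → ℂ) × (Fin n → ℂ)),
             ((Hp⁻¹.mulVec φ2, 0) : (Fin n → ℂ) × (Fin n → ℂ))})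
    ∧ LinearMap.ker (H ^ 3) = LinearMap.ker (H ^ 2)
    ∧ Module.finrank ℂ (LinearMap.ker (H ^ 2)) = 4 := by
  set S : Submodule ℂ (Fin n → ℂ) := Submodule.span ℂ {φ1, φ2} with hS
  -- invertibility of Hp
  have hdet : IsUnit Hp.det := isUnit_iff_ne_zero.mpr hHp.det_pos.ne'
  have hinvmul : Hp⁻¹ * Hp = 1 := Matrix.nonsing_inv_mul Hp hdet
  have hmulinv : Hp * Hp⁻¹ = 1 := Matrix.mul_nonsing_inv Hp hdet
  have hcancel : ∀ v : Fin n → ℂ, Hp⁻¹ *ᵥ (Hp *ᵥ v) = v := by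
    intro v; rw [Matrix.mulVec_mulVec, hinvmul, Matrix.one_mulVec]
  have hcancel' : ∀ v : Fin n → ℂ, Hp *ᵥ (Hp⁻¹ *ᵥ v) = v := by
    intro v; rw [Matrix.mulVec_mulVec, hmulinv, Matrix.one_mulVec]
  have hpinj : ∀ v : Fin n → ℂ, Hp *ᵥ v = 0 → v = 0 := by
    intro v hv
    have := congrArg (fun w => Hp⁻¹ *ᵥ w) hv
    simpa [hcancel] using this
  have hpinvinj : ∀ v : Fin n → ℂ, Hp⁻¹ *ᵥ v = 0 → v = 0 := by
    intro v hv
    have := congrArg (fun w => Hp *ᵥ w) hv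
    simpa [hcancel'] using this
  -- kernel of Hm membership
  have hkerm : ∀ g : Fin n → ℂ, Hm *ᵥ g = 0 ↔ g ∈ S := by
    intro g
    rw [← hker, LinearMap.mem_ker, Matrix.mulVecLin_apply]
  -- orthogonality: range Hm ⊥ ker Hm
  have horth : ∀ (g u : Fin n → ℂ), u ∈ S → star (Hm *ᵥ g) ⬝ᵥ u = 0 := by
    intro g u hu
    rw [Matrix.star_mulVec, ← Matrix.dotProduct_mulVec, hHm.eq, (hkerm u).mpr hu,
      dotProduct_zero]
  -- key step for H³
  have hkey : ∀ g : Fin n → ℂ, Hm *ᵥ (Hp *ᵥ (Hm *ᵥ g)) = 0 → Hm *ᵥ g = 0 := by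
    intro g hg
    by_contra hw
    have hpos := hHp.dotProduct_mulVec_pos hw
    have h0 : star (Hm *ᵥ g) ⬝ᵥ (Hp *ᵥ (Hm *ᵥ g)) = 0 :=
      horth g _ ((hkerm _).mp hg)
    rw [h0] at hpos
    exact lt_irrefl 0 hpos
  -- T
  set v1 : Fin n → ℂ := Hp⁻¹ *ᵥ φ1 with hv1
  set v2 : Fin n → ℂ := Hp⁻¹ *ᵥ φ2 with hv2
  set T : Submodule ℂ (Fin n → ℂ) := Submodule.span ℂ {v1, v2} with hT
  have hmapT : Submodule.map Hp⁻¹.mulVecLin S = T := by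
    rw [hS, hT, Submodule.map_span]
    congr 1
    simp [Set.image_insert_eq, hv1, hv2]
  have hmemT : ∀ f : Fin n → ℂ, f ∈ T ↔ Hp *ᵥ f ∈ S := by
    intro f
    constructor
    · intro hf
      rw [← hmapT] at hf
      obtain ⟨u, hu, rfl⟩ := hf
      simpa [Matrix.mulVecLin_apply, hcancel'] using hu
    · intro hf
      rw [← hmapT]
      exact ⟨Hp *ᵥ f, hf, by simp [Matrix.mulVecLin_apply, hcancel]⟩
  -- part (i)
  have part1 : LinearMap.ker H = Submodule.prod ⊥ S := by
    ext ⟨f, g⟩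
    rw [LinearMap.mem_ker, hH, Submodule.mem_prod, Prod.mk_eq_zero]
    constructor
    · rintro ⟨hg, hf⟩
      exact ⟨hpinj f hf, (hkerm g).mp hg⟩
    · rintro ⟨hf, hg⟩
      simp only [Submodule.mem_bot] at hf
      exact ⟨(hkerm g).mpr hg, by simp [hf]⟩
  -- application formulas for powers
  have hH2 : ∀ p : (Fin n → ℂ) × (Fin n → ℂ),
      (H ^ 2) p = (Hm *ᵥ (Hp *ᵥ p.1), Hp *ᵥ (Hm *ᵥ p.2)) := by
    intro p
    rw [pow_two, Module.End.mul_apply, hH, hH]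
  have hH3 : ∀ p : (Fin n → ℂ) × (Fin n → ℂ),
      (H ^ 3) p = (Hm *ᵥ (Hp *ᵥ (Hm *ᵥ p.2)), Hp *ᵥ (Hm *ᵥ (Hp *ᵥ p.1))) := by
    intro p
    rw [pow_succ, Module.End.mul_apply, hH2, hH]
  -- ker H² = T.prod S
  have hker2 : LinearMap.ker (H ^ 2) = Submodule.prod T S := by
    ext ⟨f, g⟩
    rw [LinearMap.mem_ker, hH2, Submodule.mem_prod, Prod.mk_eq_zero]
    constructor
    · rintro ⟨hf, hg⟩
      exact ⟨(hmemT f).mpr ((hkerm _).mp hf), (hkerm g).mp (hpinj _ hg)⟩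
    · rintro ⟨hf, hg⟩
      constructor
      · exact (hkerm _).mpr ((hmemT f).mp hf)
      · rw [(hkerm g).mpr hg, Matrix.mulVec_zero]
  -- span of pair = T.prod ⊥
  have hspanP : Submodule.span ℂ
      {((v1, 0) : (Fin n → ℂ) × (Fin n → ℂ)), ((v2, 0) : (Fin n → ℂ) × (Fin n → ℂ))}
      = Submodule.prod T (⊥ : Submodule ℂ (Fin n → ℂ)) := by
    rw [← Submodule.map_inl, hT, Submodule.map_span]
    congr 1
    simp [Set.image_insert_eq]
  have hspanQ : Submodule.span ℂ
      {((0, φ1) : (Fin n → ℂ) × (Fin n → ℂ)), ((0, φ2) : (Fin n → ℂ) × (Fin n → ℂ))}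
      = Submodule.prod (⊥ : Submodule ℂ (Fin n → ℂ)) S := by
    rw [← Submodule.map_inr, hS, Submodule.map_span]
    congr 1
    simp [Set.image_insert_eq]
  -- sup equality
  have hsup : Submodule.prod (⊥ : Submodule ℂ (Fin n → ℂ)) S
      ⊔ Submodule.prod T (⊥ : Submodule ℂ (Fin n → ℂ)) = Submodule.prod T S := by
    apply le_antisymm
    · exact sup_le (Submodule.prod_mono bot_le le_rfl) (Submodule.prod_mono le_rfl bot_le)
    · rintro ⟨f, g⟩ hp
      rw [Submodule.mem_prod] at hp
      have heq : ((f, g) : (Fin n → ℂ) × (Fin n → ℂ)) = (0, g) + (f, 0) := by simp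
      rw [heq]
      exact Submodule.add_mem_sup
        (Submodule.mem_prod.mpr ⟨Submodule.zero_mem _, hp.2⟩)
        (Submodule.mem_prod.mpr ⟨hp.1, Submodule.zero_mem _⟩)
  have hinf : Submodule.prod (⊥ : Submodule ℂ (Fin n → ℂ)) S
      ⊓ Submodule.prod T (⊥ : Submodule ℂ (Fin n → ℂ)) = ⊥ := by
    rw [eq_bot_iff]
    rintro ⟨f, g⟩ hp
    rw [Submodule.mem_inf, Submodule.mem_prod, Submodule.mem_prod] at hp
    obtain ⟨⟨hf1, -⟩, -, hg2⟩ := hp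
    simp only [Submodule.mem_bot] at hf1 hg2
    simp [Prod.ext_iff, hf1, hg2]
  -- part (ii)
  have part2 : LinearMap.ker (H ^ 2)
      = LinearMap.ker H ⊔ Submodule.span ℂ
          {((v1, 0) : (Fin n → ℂ) × (Fin n → ℂ)), ((v2, 0) : (Fin n → ℂ) × (Fin n → ℂ))} := by
    rw [hker2, part1, hspanP, hsup]
  -- part (iii): disjointness
  have part3 : Disjoint (LinearMap.ker H)
      (Submodule.span ℂ
        {((v1, 0) : (Fin n → ℂ) × (Fin n → ℂ)), ((v2, 0) : (Fin n → ℂ) × (Fin n → ℂ))}) := by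
    rw [part1, hspanP, disjoint_iff]
    exact hinf
  -- part (iv)
  have part4 : LinearMap.ker (H ^ 3) = LinearMap.ker (H ^ 2) := by
    rw [hker2]
    ext ⟨f, g⟩
    rw [LinearMap.mem_ker, hH3, Submodule.mem_prod, Prod.mk_eq_zero]
    constructor
    · rintro ⟨hg, hf⟩
      exact ⟨(hmemT f).mpr ((hkerm _).mp (hpinj _ hf)), (hkerm g).mp (hkey g hg)⟩
    · rintro ⟨hf, hg⟩
      constructor
      · rw [(hkerm g).mpr hg]
        simp
      · rw [(hkerm _).mpr ((hmemT f).mp hf), Matrix.mulVec_zero]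
  -- dimensions
  have hindv : LinearIndependent ℂ ![v1, v2] := by
    have hk : LinearMap.ker Hp⁻¹.mulVecLin = ⊥ := by
      rw [LinearMap.ker_eq_bot']
      intro m hm
      exact hpinvinj m hm
    have h := hind.map' Hp⁻¹.mulVecLin hk
    convert h using 1
    funext i
    fin_cases i <;> simp [hv1, hv2]
    all_goals rfl
  have hindQ : LinearIndependent ℂ
      ![((0, φ1) : (Fin n → ℂ) × (Fin n → ℂ)), ((0, φ2) : (Fin n → ℂ) × (Fin n → ℂ))] := by
    have h := hind.map' (LinearMap.inr ℂ (Fin n → ℂ) (Fin n → ℂ)) (Submodule.ker_inr (R := ℂ) (M := Fin n → ℂ) (M₂ := Fin n → ℂ))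
    convert h using 1
    funext i
    fin_cases i <;> simp
    all_goals rfl
  have hindP : LinearIndependent ℂ
      ![((v1, 0) : (Fin n → ℂ) × (Fin n → ℂ)), ((v2, 0) : (Fin n → ℂ) × (Fin n → ℂ))] := by
    have h := hindv.map' (LinearMap.inl ℂ (Fin n → ℂ) (Fin n → ℂ)) (Submodule.ker_inl (R := ℂ) (M := Fin n → ℂ) (M₂ := Fin n → ℂ))
    convert h using 1
    funext i
    fin_cases i <;> simp
    all_goals rfl
  have hA : Module.finrank ℂ (Submodule.prod (⊥ : Submodule ℂ (Fin n → ℂ)) S) = 2 := by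
    rw [← hspanQ]
    exact finrank_span_pair_aux _ _ hindQ
  have hB : Module.finrank ℂ (Submodule.prod T (⊥ : Submodule ℂ (Fin n → ℂ))) = 2 := by
    rw [← hspanP]
    exact finrank_span_pair_aux _ _ hindP
  have hfinal : Module.finrank ℂ (LinearMap.ker (H ^ 2)) = 4 := by
    have h1 := Submodule.finrank_sup_add_finrank_inf_eq
      (Submodule.prod (⊥ : Submodule ℂ (Fin n → ℂ)) S)
      (Submodule.prod T (⊥ : Submodule ℂ (Fin n → ℂ)))
    rw [hsup, hinf, hA, hB] at h1
    rw [hker2]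
    simpa using h1
  exact ⟨part1, part2, part3, part4, hfinal⟩
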